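/- For f ∈ ℝ³, f ≠ 0, the matrix exponential of S(f) is given by Rodrigues' formula: exp(S(f)) = I + (sin‖f‖/‖f‖) S(f) + ((1 − cos‖f‖)/‖f‖²) S(f)², and this matrix lies in SO(3). -/

import Mathlib

open Matrix

/-- The hat map `S : ℝ³ → 𝔰𝔬(3)`, with `S(f) v = f × v`. -/
def hat (f : Fin 3 → ℝ) : Matrix (Fin 3) (Fin 3) ℝ :=
  !![0, -f 2, f 1; f 2, 0, -f 0; -f 1, f 0, 0]

lemma hat_cube (f : Fin 3 → ℝ) :
    hat f * hat f * hat f = (-(f 0 ^ 2 + f 1 ^ 2 + f 2 ^ 2)) • hat f := by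
  ext i j
  fin_cases i <;> fin_cases j <;>
    simp [hat, Matrix.mul_apply, Fin.sum_univ_succ] <;> ring

lemma hat_pow_odd (f : Fin 3 → ℝ) (k : ℕ) :
    hat f ^ (2 * k + 1) = (-(f 0 ^ 2 + f 1 ^ 2 + f 2 ^ 2)) ^ k • hat f := by
  induction k with
  | zero => simp
  | succ k ih =>
    have : 2 * (k + 1) + 1 = (2 * k + 1) + 2 := by ring
    rw [this, pow_add, ih, smul_mul_assoc, pow_two (hat f), ← mul_assoc, hat_cube, smul_smul]
    rw [← pow_succ]

lemma hat_pow_even (f : Fin 3 → ℝ) (k : ℕ) :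
    hat f ^ (2 * k + 2) = (-(f 0 ^ 2 + f 1 ^ 2 + f 2 ^ 2)) ^ k • (hat f * hat f) := by
  have : 2 * k + 2 = (2 * k + 1) + 1 := rfl
  rw [this, pow_succ, hat_pow_odd, smul_mul_assoc]

/-- For `f ∈ ℝ³`, `f ≠ 0`, the matrix exponential of `S(f)` is given by
Rodrigues' formula `exp(S(f)) = I + (sin‖f‖/‖f‖) S(f) + ((1−cos‖f‖)/‖f‖²) S(f)²`,
and this matrix lies in `SO(3)`. -/
theorem rodrigues_formula (f : Fin 3 → ℝ) (hf : f ≠ 0) :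
    let r : ℝ := Real.sqrt (f 0 ^ 2 + f 1 ^ 2 + f 2 ^ 2)
    NormedSpace.exp (hat f) =
        1 + (Real.sin r / r) • hat f +
          ((1 - Real.cos r) / r ^ 2) • (hat f * hat f) ∧
      (NormedSpace.exp (hat f))ᵀ * NormedSpace.exp (hat f) = 1 ∧
      (NormedSpace.exp (hat f)).det = 1 := by
  intro r
  set q : ℝ := f 0 ^ 2 + f 1 ^ 2 + f 2 ^ 2 with hq_def
  have hq : 0 < q := by
    by_contra hq0
    push_neg at hq0
    rw [hq_def] at hq0
    have h0 : f 0 = 0 := by nlinarith [sq_nonneg (f 0), sq_nonneg (f 1), sq_nonneg (f 2)]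
    have h1 : f 1 = 0 := by nlinarith [sq_nonneg (f 0), sq_nonneg (f 1), sq_nonneg (f 2)]
    have h2 : f 2 = 0 := by nlinarith [sq_nonneg (f 0), sq_nonneg (f 1), sq_nonneg (f 2)]
    apply hf
    funext i
    fin_cases i <;> simpa using ‹_›
  have hr : 0 < r := Real.sqrt_pos.mpr hq
  have hr2 : r ^ 2 = q := Real.sq_sqrt hq.le
  have hrne : r ≠ 0 := hr.ne'
  set A := hat f with hA
  -- Rodrigues formula
  have key : NormedSpace.exp A =
      1 + (Real.sin r / r) • A + ((1 - Real.cos r) / r ^ 2) • (A * A) := by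
    rw [NormedSpace.exp_eq_tsum (𝕂 := ℝ)]
    refine HasSum.tsum_eq ?_
    have h00 : ((Nat.factorial 0 : ℝ))⁻¹ • A ^ 0 = 1 := by simp
    rw [← hasSum_nat_add_iff' (f := fun n => ((Nat.factorial n : ℝ)⁻¹ • A ^ n)) 1]
    simp only [Finset.range_one, Finset.sum_singleton]
    rw [h00]
    have heq : (1 + (Real.sin r / r) • A + ((1 - Real.cos r) / r ^ 2) • (A * A)) - 1
        = (Real.sin r / r) • A + ((1 - Real.cos r) / r ^ 2) • (A * A) := by abel
    rw [heq]
    refine HasSum.even_add_odd ?_ ?_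
    · -- even indices n = 2k give terms (2k+1)!⁻¹ • A^(2k+1)
      have hs := ((Real.hasSum_sin r).div_const r).smul_const A
      convert hs using 2 with k
      · rfl
      rw [hat_pow_odd]
      rw [smul_smul]
      congr 1
      have : (-q : ℝ) ^ k = (-1) ^ k * r ^ (2 * k) := by
        rw [← hr2]; rw [neg_pow]; ring_nf
      rw [this]
      field_simp
      ring
    · -- odd indices n = 2k+1 give terms (2k+2)!⁻¹ • A^(2k+2)
      have hc := Real.hasSum_cos r
      have hc1 := (hasSum_nat_add_iff' 1).mpr hc
      simp only [Finset.range_one, Finset.sum_singleton] at hc1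
      have hc2 := hc1.neg
      have hc3 := (hc2.div_const (r ^ 2)).smul_const (A * A)
      convert hc3 using 2 with k
      · rfl
      · rw [show 2 * k + 1 + 1 = 2 * k + 2 from rfl, hat_pow_even]
        rw [smul_smul]
        congr 1
        have : (-q : ℝ) ^ k = (-1) ^ k * r ^ (2 * k) := by
          rw [← hr2]; rw [neg_pow]; ring_nf
        rw [this]
        have hfac : ((Nat.factorial (2 * (k + 1)) : ℝ)) ≠ 0 := by positivity
        field_simp
        ring
      · congr 1
        norm_num
  refine ⟨key, ?_, ?_⟩
  · have hT : Aᵀ = -A := by ext i j; fin_cases i <;> fin_cases j <;> simp [hA, hat]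
    have h2 := Matrix.exp_add_of_commute (-A) A (Commute.neg_left (Commute.refl A))
    rw [neg_add_cancel, NormedSpace.exp_zero] at h2
    rw [← Matrix.exp_transpose, hT]
    exact h2.symm
  · rw [key]
    have hsc := Real.sin_sq_add_cos_sq r
    have hAA : A * A = !![-(f 1 ^ 2 + f 2 ^ 2), f 0 * f 1, f 0 * f 2;
        f 0 * f 1, -(f 0 ^ 2 + f 2 ^ 2), f 1 * f 2;
        f 0 * f 2, f 1 * f 2, -(f 0 ^ 2 + f 1 ^ 2)] := by
      rw [hA, hat, Matrix.mul_fin_three]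
      congr 1 <;> ring
    have hM : (1 : Matrix (Fin 3) (Fin 3) ℝ) + (Real.sin r / r) • A +
        ((1 - Real.cos r) / r ^ 2) • (A * A) =
        !![1 - (1 - Real.cos r) / r ^ 2 * (f 1 ^ 2 + f 2 ^ 2),
           -(Real.sin r / r * f 2) + (1 - Real.cos r) / r ^ 2 * (f 0 * f 1),
           Real.sin r / r * f 1 + (1 - Real.cos r) / r ^ 2 * (f 0 * f 2);
           Real.sin r / r * f 2 + (1 - Real.cos r) / r ^ 2 * (f 0 * f 1),
           1 - (1 - Real.cos r) / r ^ 2 * (f 0 ^ 2 + f 2 ^ 2),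
           -(Real.sin r / r * f 0) + (1 - Real.cos r) / r ^ 2 * (f 1 * f 2);
           -(Real.sin r / r * f 1) + (1 - Real.cos r) / r ^ 2 * (f 0 * f 2),
           Real.sin r / r * f 0 + (1 - Real.cos r) / r ^ 2 * (f 1 * f 2),
           1 - (1 - Real.cos r) / r ^ 2 * (f 0 ^ 2 + f 1 ^ 2)] := by
      rw [hAA, hA, hat, Matrix.one_fin_three]
      ext i j
      fin_cases i <;> fin_cases j <;>
        simp [Matrix.add_apply, Matrix.smul_apply, smul_eq_mul] <;> ring
    rw [hM, Matrix.det_fin_three]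
    norm_num [Matrix.cons_val_zero, Matrix.cons_val_one, Matrix.head_cons, Matrix.cons_val_two, Matrix.tail_cons]
    set a := Real.sin r / r with ha_def
    set b := (1 - Real.cos r) / r ^ 2 with hb_def
    have hb : b * q = 1 - Real.cos r := by
      rw [hb_def, ← hr2]; field_simp
    have ha : a ^ 2 * q = Real.sin r ^ 2 := by
      rw [ha_def, ← hr2]; field_simp
    have expand : (1 - b * (f 1 ^ 2 + f 2 ^ 2)) * (1 - b * (f 0 ^ 2 + f 2 ^ 2)) * (1 - b * (f 0 ^ 2 + f 1 ^ 2)) -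
              (1 - b * (f 1 ^ 2 + f 2 ^ 2)) * (-(a * f 0) + b * (f 1 * f 2)) * (a * f 0 + b * (f 1 * f 2)) -
            (-(a * f 2) + b * (f 0 * f 1)) * (a * f 2 + b * (f 0 * f 1)) * (1 - b * (f 0 ^ 2 + f 1 ^ 2)) +
          (-(a * f 2) + b * (f 0 * f 1)) * (-(a * f 0) + b * (f 1 * f 2)) * (-(a * f 1) + b * (f 0 * f 2)) +
        (a * f 1 + b * (f 0 * f 2)) * (a * f 2 + b * (f 0 * f 1)) * (a * f 0 + b * (f 1 * f 2)) -
      (a * f 1 + b * (f 0 * f 2)) * (1 - b * (f 0 ^ 2 + f 2 ^ 2)) * (-(a * f 1) + b * (f 0 * f 2)) =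
        (1 - b * q) ^ 2 + a ^ 2 * q := by
      rw [hq_def]; ring
    rw [expand]
    have hbq : 1 - b * q = Real.cos r := by rw [hb]; ring
    rw [hbq, ha]
    exact Real.cos_sq_add_sin_sq r
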